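/- Let A be a ring, M a free A-module of rank m with basis e_1,…,e_m, and let P = (I_0, I_1,…,I_r) be a partition of {1,…,m} into disjoint subsets (with I_1,…,I_r nonempty). Then the elements (∑_{i∈I_1} e_i) ∧ ⋯ ∧ (∑_{i∈I_r} e_i), as P ranges over all such partitions into r nonempty blocks together with a complementary block I_0, form a basis of the free A-module ⋀^r M. -/

import Mathlib

/-!
Statement 0 (Lemma `partition-basis`):
Let `A` be a commutative ring, `M` a free `A`-module with basis `e : Fin m → M`, and
`r : ℕ`.  Ordered partitions `(I_0, I_1, …, I_r)` of `Fin m` with `I_1, …, I_r` nonempty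
and the elements of `I_j` smaller than those of `I_{j+1}` are encoded as monotone maps
`P : Fin m →o Fin (r+1)` whose fibers over every nonzero `j` are nonempty
(`I_j` is the fiber of `j`, `I_0` the fiber of `0`).
The claim: the elements `(∑_{i ∈ I_1} e i) ∧ ⋯ ∧ (∑_{i ∈ I_r} e i)` form a basis of the
`r`-th exterior power `⋀[A]^r M`.
-/

open scoped BigOperators

section AuxPartitionBasis

open ExteriorAlgebra Finset

variable {A : Type*} [CommRing A] {M : Type*} [AddCommGroup M] [Module A M] {m r : ℕ}

-- fibers as finsets
def fib (P : Fin m →o Fin (r+1)) (j : Fin r) : Finset (Fin m) :=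
  Finset.univ.filter (fun i => P i = j.succ)

lemma choice_strictMono (P : Fin m →o Fin (r+1)) {c : Fin r → Fin m}
    (hc : ∀ j, P (c j) = j.succ) : StrictMono c := by
  intro a b hab
  by_contra h
  push_neg at h
  have := P.monotone h
  rw [hc a, hc b] at this
  exact absurd (Fin.succ_lt_succ_iff.mpr hab) (not_lt.mpr this)

-- multilinear expansion of an alternating map applied to fiber sums
lemma alt_apply_fib_sums {N : Type*} [AddCommGroup N] [Module A N]
    (f : M [⋀^Fin r]→ₗ[A] N) (e : Module.Basis (Fin m) A M) (P : Fin m →o Fin (r+1)) :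
    f (fun j => ∑ i ∈ fib P j, e i) =
      ∑ c ∈ Fintype.piFinset (fun j => fib P j), f (fun j => e (c j)) := by
  exact f.toMultilinearMap.map_sum_finset (fun j i => e i) (fun j => fib P j)

noncomputable def dualForm (e : Module.Basis (Fin m) A M) (s : Fin r → Fin m) : M [⋀^Fin r]→ₗ[A] A :=
  (Matrix.detRowAlternating (R := A) (n := Fin r)).compLinearMap
    (LinearMap.pi (fun j => e.coord (s j)))

lemma dualForm_apply_basis (e : Module.Basis (Fin m) A M) (s c : Fin r → Fin m)
    (hs : StrictMono s) (hc : StrictMono c) :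
    dualForm e s (fun j => e (c j)) = if c = s then 1 else 0 := by
  have hmat : dualForm e s (fun j => e (c j)) =
      Matrix.det (Matrix.of fun i j => if c i = s j then (1:A) else 0) := by
    simp only [dualForm, AlternatingMap.compLinearMap_apply, Matrix.detRowAlternating,
      AlternatingMap.coe_mk]
    congr 1
    ext i j
    simp [LinearMap.pi_apply, Module.Basis.coord_apply, Module.Basis.repr_self, Finsupp.single_apply]
  rw [hmat]
  by_cases h : c = s
  · subst h
    rw [if_pos rfl]
    have : (Matrix.of fun i j => if c i = c j then (1:A) else 0) = 1 := by
      ext i j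
      simp [Matrix.one_apply, hc.injective.eq_iff]
    rw [this, Matrix.det_one]
  · rw [if_neg h]
    have hr : Set.range c ≠ Set.range s := by
      intro hrange
      have inst : WellFoundedLT (Fin r) := inferInstance
      exact h ((@StrictMono.range_inj (Fin r) (Fin m) Fin.instLinearOrder (by infer_instance) inst c s hc hs).mp hrange)
    have : ∃ x, (x ∈ Set.range c ∧ x ∉ Set.range s) ∨ (x ∈ Set.range s ∧ x ∉ Set.range c) := by
      by_contra hcon
      push_neg at hcon
      apply hr
      ext x
      rcases hcon x with ⟨h1, h2⟩
      exact ⟨h1, h2⟩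
    rcases this with ⟨x, ⟨⟨i, rfl⟩, hns⟩ | ⟨⟨j, rfl⟩, hnc⟩⟩
    · apply Matrix.det_eq_zero_of_row_eq_zero i
      intro j
      simp only [Matrix.of_apply, ite_eq_right_iff]
      intro hij; exact absurd ⟨j, hij.symm⟩ hns
    · apply Matrix.det_eq_zero_of_column_eq_zero j
      intro i
      simp only [Matrix.of_apply, ite_eq_right_iff]
      intro hij; exact absurd ⟨i, hij⟩ hnc

-- the subtype of admissible partitions
abbrev PT (m r : ℕ) := {P : Fin m →o Fin (r + 1) // ∀ j : Fin (r + 1), j ≠ 0 → ∃ i, P i = j}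

lemma fib_nonempty (P : PT m r) (j : Fin r) : (fib P.1 j).Nonempty := by
  obtain ⟨i, hi⟩ := P.2 j.succ (Fin.succ_ne_zero j)
  exact ⟨i, by simp [fib, hi]⟩

noncomputable def minmap (P : PT m r) (j : Fin r) : Fin m :=
  (fib P.1 j).min' (fib_nonempty P j)

lemma minmap_mem (P : PT m r) (j : Fin r) : P.1 (minmap P j) = j.succ := by
  have := Finset.min'_mem (fib P.1 j) (fib_nonempty P j)
  exact (Finset.mem_filter.mp this).2

lemma minmap_le (P : PT m r) (j : Fin r) {i : Fin m} (hi : P.1 i = j.succ) :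
    minmap P j ≤ i :=
  Finset.min'_le _ _ (by simp [fib, hi])

lemma minmap_strictMono (P : PT m r) : StrictMono (minmap P) :=
  choice_strictMono P.1 (minmap_mem P)

lemma minmap_injective : Function.Injective (minmap (m := m) (r := r)) := by
  have key : ∀ P Q : PT m r, minmap P = minmap Q → ∀ i, P.1 i ≤ Q.1 i := by
    intro P Q hPQ i
    by_contra hlt
    push_neg at hlt
    have hne : P.1 i ≠ 0 := fun h => Fin.not_lt_zero _ (h ▸ hlt)
    obtain ⟨k, hk⟩ := Fin.exists_succ_eq_of_ne_zero hne
    have h1 : minmap P k ≤ i := minmap_le P k hk.symm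
    have h2 : Q.1 (minmap Q k) ≤ Q.1 i := Q.1.monotone (hPQ ▸ h1)
    rw [minmap_mem Q k] at h2
    exact absurd hlt (not_lt.mpr (hk ▸ h2))
  intro P Q hPQ
  apply Subtype.ext
  apply OrderHom.ext
  funext i
  exact le_antisymm (key P Q hPQ i) (key Q P hPQ.symm i)

def pOf {s : Fin r → Fin m} (hs : StrictMono s) : PT m r := by
  refine ⟨⟨fun i => ⟨(univ.filter (fun j => s j ≤ i)).card, ?_⟩, ?_⟩, ?_⟩
  · exact Nat.lt_succ_of_le (le_trans (Finset.card_filter_le _ _) (by simp))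
  · intro a b hab
    simp only [Fin.mk_le_mk]
    apply Finset.card_le_card
    intro j hj
    simp only [Finset.mem_filter, Finset.mem_univ, true_and] at *
    exact le_trans hj hab
  · intro j hj
    obtain ⟨k, hk⟩ := Fin.exists_succ_eq_of_ne_zero hj
    refine ⟨s k, ?_⟩
    rw [← hk]
    apply Fin.ext
    have heq : univ.filter (fun j' => s j' ≤ s k) = Finset.Iic k := by
      ext a; simp [hs.le_iff_le]
    show (univ.filter (fun j' => s j' ≤ s k)).card = (k.succ : ℕ)
    rw [heq, Fin.card_Iic, Fin.val_succ]

lemma pOf_apply_eq_succ {s : Fin r → Fin m} (hs : StrictMono s) {i : Fin m} {j : Fin r}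
    (h : (pOf hs).1 i = j.succ) : s j ≤ i := by
  have hcard : (univ.filter (fun j' => s j' ≤ i)).card = (j : ℕ) + 1 := by
    have := congrArg Fin.val h
    exact this
  by_contra hlt
  push_neg at hlt
  have hsub : univ.filter (fun j' => s j' ≤ i) ⊆ Finset.Iio j := by
    intro a ha
    simp only [Finset.mem_filter] at ha
    simp only [Finset.mem_Iio]
    exact hs.lt_iff_lt.mp (lt_of_le_of_lt ha.2 hlt)
  have := Finset.card_le_card hsub
  rw [hcard, Fin.card_Iio] at this
  omega

lemma minmap_pOf {s : Fin r → Fin m} (hs : StrictMono s) : minmap (pOf hs) = s := by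
  funext j
  have hmem : (pOf hs).1 (s j) = j.succ := by
    apply Fin.ext
    have heq : univ.filter (fun j' => s j' ≤ s j) = Finset.Iic j := by
      ext a; simp [hs.le_iff_le]
    exact (congrArg Finset.card heq).trans (Fin.card_Iic j)
  exact le_antisymm (minmap_le _ _ hmem) (pOf_apply_eq_succ hs (minmap_mem _ j))

noncomputable def wP (e : Module.Basis (Fin m) A M) (P : PT m r) : ExteriorAlgebra A M :=
  ιMulti A r (fun j => ∑ i ∈ fib P.1 j, e i)

noncomputable def Fs (e : Module.Basis (Fin m) A M) (s : Fin r → Fin m) :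
    ExteriorAlgebra A M →ₗ[A] A :=
  liftAlternating (Function.update (fun n => (0 : M [⋀^Fin n]→ₗ[A] A)) r (dualForm e s))

lemma Fs_ιMulti (e : Module.Basis (Fin m) A M) (s : Fin r → Fin m) (v : Fin r → M) :
    Fs e s (ιMulti A r v) = dualForm e s v := by
  rw [Fs, liftAlternating_apply_ιMulti]
  simp

lemma Fs_wP (e : Module.Basis (Fin m) A M) {s : Fin r → Fin m} (hs : StrictMono s) (P : PT m r) :
    Fs e s (wP e P) = if (∀ j, P.1 (s j) = j.succ) then 1 else 0 := by
  rw [wP, Fs_ιMulti, alt_apply_fib_sums (dualForm e s) e P.1]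
  have step : ∀ c ∈ Fintype.piFinset (fun j => fib P.1 j),
      dualForm e s (fun j => e (c j)) = if c = s then 1 else 0 := by
    intro c hc
    rw [Fintype.mem_piFinset] at hc
    have hc' : ∀ j, P.1 (c j) = j.succ := fun j => by
      have := hc j; simpa [fib] using this
    exact dualForm_apply_basis e s c hs (choice_strictMono P.1 hc')
  rw [Finset.sum_congr rfl step, Finset.sum_ite_eq' _ s (fun _ => (1:A))]
  congr 1
  simp [Fintype.mem_piFinset, fib, eq_iff_iff]

lemma pOf_apply_self {s : Fin r → Fin m} (hs : StrictMono s) (j : Fin r) :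
    (pOf hs).1 (s j) = j.succ := by
  have := minmap_mem (pOf hs) j
  rwa [minmap_pOf hs] at this

lemma nu_lt {c : Fin r → Fin m} (hr : 0 < r) : ∑ j, (c j : ℕ) < r * m := by
  have hm : 0 < m := lt_of_le_of_lt (Nat.zero_le _) (c ⟨0, hr⟩).isLt
  calc ∑ j, (c j : ℕ) ≤ ∑ _j : Fin r, (m - 1) :=
        Finset.sum_le_sum (fun j _ => Nat.le_sub_one_of_lt (c j).isLt)
    _ = r * (m - 1) := by simp [Finset.sum_const, mul_comm]
    _ < r * m := Nat.mul_lt_mul_of_le_of_lt (le_refl r) (Nat.sub_lt hm one_pos) hr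

lemma sorted_mem (e : Module.Basis (Fin m) A M) :
    ∀ (k : ℕ) (s : Fin r → Fin m), StrictMono s → r * m - (∑ j, (s j : ℕ)) ≤ k →
    ιMulti A r (fun j => e (s j)) ∈ Submodule.span A (Set.range (wP (m := m) (r := r) e)) := by
  intro k
  induction k with
  | zero =>
    intro s hs hk
    have hw : wP e (pOf hs) =
        ∑ c ∈ Fintype.piFinset (fun j => fib (pOf hs).1 j), ιMulti A r (fun j => e (c j)) :=
      alt_apply_fib_sums (ιMulti A r) e (pOf hs).1
    have hsmem : s ∈ Fintype.piFinset (fun j => fib (pOf hs).1 j) := by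
      rw [Fintype.mem_piFinset]
      intro j
      simp [fib, pOf_apply_self hs j]
    have herase : (Fintype.piFinset (fun j => fib (pOf hs).1 j)).erase s = ∅ := by
      rw [Finset.eq_empty_iff_forall_notMem]
      intro c hc
      rw [Finset.mem_erase, Fintype.mem_piFinset] at hc
      obtain ⟨hne, hcm⟩ := hc
      have hr : 0 < r := by
        rcases Nat.eq_zero_or_pos r with h0 | h0
        · subst h0; exact absurd (funext (fun j => j.elim0)) hne
        · exact h0
      have hle : ∀ j, s j ≤ c j := fun j =>
        pOf_apply_eq_succ hs (by simpa [fib] using hcm j)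
      have : r * m ≤ ∑ j, (s j : ℕ) := Nat.le_of_sub_eq_zero (Nat.le_zero.mp hk)
      have : r * m ≤ ∑ j, (c j : ℕ) :=
        le_trans this (Finset.sum_le_sum (fun j _ => hle j))
      exact absurd this (not_le.mpr (nu_lt hr))
    rw [← Finset.sum_erase_add _ _ hsmem, herase, Finset.sum_empty, zero_add] at hw
    rw [← hw]
    exact Submodule.subset_span ⟨pOf hs, rfl⟩
  | succ k ih =>
    intro s hs hk
    have hw : wP e (pOf hs) =
        ∑ c ∈ Fintype.piFinset (fun j => fib (pOf hs).1 j), ιMulti A r (fun j => e (c j)) :=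
      alt_apply_fib_sums (ιMulti A r) e (pOf hs).1
    have hsmem : s ∈ Fintype.piFinset (fun j => fib (pOf hs).1 j) := by
      rw [Fintype.mem_piFinset]
      intro j
      simp [fib, pOf_apply_self hs j]
    rw [← Finset.sum_erase_add _ _ hsmem] at hw
    have : ιMulti A r (fun j => e (s j)) = wP e (pOf hs) -
        ∑ c ∈ (Fintype.piFinset (fun j => fib (pOf hs).1 j)).erase s,
          ιMulti A r (fun j => e (c j)) := by
      rw [hw]; abel
    rw [this]
    apply Submodule.sub_mem
    · exact Submodule.subset_span ⟨pOf hs, rfl⟩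
    · apply Submodule.sum_mem
      intro c hc
      rw [Finset.mem_erase, Fintype.mem_piFinset] at hc
      obtain ⟨hne, hcm⟩ := hc
      have hcs : ∀ j, (pOf hs).1 (c j) = j.succ := fun j => by simpa [fib] using hcm j
      have hle : ∀ j, s j ≤ c j := fun j => pOf_apply_eq_succ hs (hcs j)
      have hlt : ∑ j, (s j : ℕ) < ∑ j, (c j : ℕ) := by
        apply Finset.sum_lt_sum (fun j _ => Fin.le_def.mp (hle j))
        obtain ⟨j, hj⟩ := Function.ne_iff.mp (Ne.symm hne)
        exact ⟨j, Finset.mem_univ j, Fin.lt_def.mp (lt_of_le_of_ne (hle j) hj)⟩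
      exact ih c (choice_strictMono (pOf hs).1 hcs) (by omega)

lemma exteriorPower_le_span (e : Module.Basis (Fin m) A M) :
    (⋀[A]^r M : Submodule A (ExteriorAlgebra A M)) ≤
      Submodule.span A (Set.range (wP (m := m) (r := r) e)) := by
  rw [← ιMulti_span_fixedDegree, Submodule.span_le]
  rintro _ ⟨v, rfl⟩
  have hv : ιMulti A r v =
      ∑ c ∈ Fintype.piFinset (fun _ : Fin r => (Finset.univ : Finset (Fin m))),
        ιMulti A r (fun j => e.repr (v j) (c j) • e (c j)) := by
    have := (ιMulti A r (M := M)).toMultilinearMap.map_sum_finset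
      (fun j i => e.repr (v j) i • e i) (fun _ => (Finset.univ : Finset (Fin m)))
    simp only [AlternatingMap.coe_multilinearMap] at this
    rw [← this]
    congr 1
    funext j
    exact (e.sum_repr (v j)).symm
  rw [hv]
  apply Submodule.sum_mem
  intro c _
  have hsmul : ιMulti A r (fun j => e.repr (v j) (c j) • e (c j)) =
      (∏ j, e.repr (v j) (c j)) • ιMulti A r (fun j => e (c j)) := by
    exact (ιMulti A r (M := M)).toMultilinearMap.map_smul_univ _ _
  rw [hsmul]
  apply Submodule.smul_mem
  by_cases hinj : Function.Injective c
  · -- sort c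
    set S : Finset (Fin m) := Finset.univ.image c with hS
    have hcard : S.card = r := by
      rw [hS, Finset.card_image_of_injective _ hinj, Finset.card_univ, Fintype.card_fin]
    set s : Fin r → Fin m := fun j => S.orderEmbOfFin hcard j with hsdef
    have hs : StrictMono s := (S.orderEmbOfFin hcard).strictMono
    have hmem : ∀ j, c j ∈ S := fun j => Finset.mem_image_of_mem c (Finset.mem_univ j)
    set σ : Fin r → Fin r := fun j => (S.orderIsoOfFin hcard).symm ⟨c j, hmem j⟩ with hσ
    have hcs : ∀ j, s (σ j) = c j := by
      intro j
      show (S.orderEmbOfFin hcard) ((S.orderIsoOfFin hcard).symm ⟨c j, hmem j⟩) = c j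
      rw [Finset.orderEmbOfFin_apply]
      exact congrArg Subtype.val ((S.orderIsoOfFin hcard).apply_symm_apply ⟨c j, hmem j⟩)
    have hσinj : Function.Injective σ := by
      intro a b hab
      apply hinj
      rw [← hcs a, ← hcs b, hab]
    let σe : Equiv.Perm (Fin r) := Equiv.ofBijective σ (Finite.injective_iff_bijective.mp hσinj)
    have hfun : (fun j => e (c j)) = (fun j => e (s j)) ∘ σe := by
      funext j
      simp [σe, Equiv.ofBijective, hcs j]
    rw [hfun]
    rw [AlternatingMap.map_perm]
    have hbase := sorted_mem e (r * m - ∑ j, (s j : ℕ)) s hs le_rfl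
    rcases Int.units_eq_one_or (Equiv.Perm.sign σe) with h1 | h1
    · rw [h1]; simpa using hbase
    · rw [h1]
      simp only [Units.smul_def, Units.val_neg, Units.val_one, neg_smul, one_smul]
      exact Submodule.neg_mem _ hbase
  · rw [Function.not_injective_iff] at hinj
    obtain ⟨a, b, hab, hne⟩ := hinj
    rw [AlternatingMap.map_eq_zero_of_eq (ιMulti A r) _ (i := a) (j := b)
      (by rw [hab]) hne]
    exact Submodule.zero_mem _

lemma wP_linearIndependent (e : Module.Basis (Fin m) A M) :
    LinearIndependent A (wP (m := m) (r := r) e) := by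
  classical
  rw [linearIndependent_iff']
  intro t g hsum P₀ hP₀
  -- strong induction on the measure of minmap P₀ (smaller measure first)
  by_contra hg
  -- consider the set of P in t with g P ≠ 0, choose one with minimal measure
  have hne : (t.filter (fun P => g P ≠ 0)).Nonempty := ⟨P₀, Finset.mem_filter.mpr ⟨hP₀, hg⟩⟩
  obtain ⟨Q, hQmem, hQmin⟩ := Finset.exists_min_image (t.filter (fun P => g P ≠ 0))
    (fun P => ∑ j, (minmap P j : ℕ)) hne
  rw [Finset.mem_filter] at hQmem
  obtain ⟨hQt, hQg⟩ := hQmem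
  -- apply the functional Fs for s = minmap Q
  have happ := congrArg (Fs e (minmap Q)) hsum
  rw [map_sum, map_zero] at happ
  have hterm : ∀ P ∈ t, Fs e (minmap Q) (g P • wP e P) = if P = Q then g P else 0 := by
    intro P hPt
    rw [map_smul, Fs_wP e (minmap_strictMono Q) P]
    by_cases hPQ : P = Q
    · subst hPQ
      rw [if_pos (fun j => minmap_mem P j), if_pos rfl]
      simp
    · rw [if_neg hPQ]
      by_cases hgP : g P = 0
      · simp [hgP]
      · rw [if_neg, smul_zero]
        intro hall
        -- then minmap P ≤ minmap Q pointwise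
        have hle : ∀ j, minmap P j ≤ minmap Q j := fun j => minmap_le P j (hall j)
        have hge : ∑ j, (minmap Q j : ℕ) ≤ ∑ j, (minmap P j : ℕ) :=
          hQmin P (Finset.mem_filter.mpr ⟨hPt, hgP⟩)
        have hle' : ∑ j, (minmap P j : ℕ) ≤ ∑ j, (minmap Q j : ℕ) :=
          Finset.sum_le_sum (fun j _ => Fin.le_def.mp (hle j))
        have hsums : ∑ j, (minmap Q j : ℕ) = ∑ j, (minmap P j : ℕ) := le_antisymm hge hle'
        have heq : minmap P = minmap Q := by
          funext j
          have := (Finset.sum_eq_sum_iff_of_le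
            (fun j _ => Fin.le_def.mp (hle j))).mp hsums.symm j (Finset.mem_univ j)
          exact Fin.ext this
        exact hPQ (minmap_injective heq)
  rw [Finset.sum_congr rfl hterm, Finset.sum_ite_eq' t Q g] at happ
  rw [if_pos hQt] at happ
  exact hQg happ

lemma wP_mem (e : Module.Basis (Fin m) A M) (P : PT m r) : wP e P ∈ ⋀[A]^r M :=
  ιMulti_range A r (Set.mem_range_self _)

open scoped BigOperators

theorem partition_basis_of_exteriorPower'
    {A : Type*} [CommRing A] {M : Type*} [AddCommGroup M] [Module A M]
    (m r : ℕ) (e : Module.Basis (Fin m) A M) :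
    ∃ b : Module.Basis {P : Fin m →o Fin (r + 1) // ∀ j : Fin (r + 1), j ≠ 0 → ∃ i, P i = j}
        A (⋀[A]^r M),
      ∀ P, (b P : ExteriorAlgebra A M) =
        ExteriorAlgebra.ιMulti A r
          (fun j : Fin r =>
            ∑ i ∈ Finset.univ.filter (fun i : Fin m => P.1 i = Fin.succ j), e i) := by
  set WS : PT m r → (⋀[A]^r M : Submodule A (ExteriorAlgebra A M)) :=
    fun P => ⟨wP e P, wP_mem e P⟩ with hWS
  have hcomp : (Submodule.subtype (⋀[A]^r M)) ∘ WS = wP e := rfl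
  have hli : LinearIndependent A WS := by
    apply LinearIndependent.of_comp (Submodule.subtype (⋀[A]^r M))
    rw [hcomp]  -- might need adjusting
    exact wP_linearIndependent e
  have hspan : ⊤ ≤ Submodule.span A (Set.range WS) := by
    rintro ⟨x, hx⟩ -
    have hx' : x ∈ Submodule.span A (Set.range (wP (m := m) (r := r) e)) :=
      exteriorPower_le_span e hx
    have himg : Set.range (wP (m := m) (r := r) e) =
        (Submodule.subtype (⋀[A]^r M)) '' (Set.range WS) := by
      rw [← Set.range_comp, hcomp]
    rw [himg, ← Submodule.map_span] at hx'
    obtain ⟨y, hy, hyx⟩ := hx'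
    have : (⟨x, hx⟩ : (⋀[A]^r M : Submodule A (ExteriorAlgebra A M))) = y :=
      Subtype.ext hyx.symm
    rw [this]
    exact hy
  refine ⟨Module.Basis.mk hli hspan, ?_⟩
  intro P
  have : Module.Basis.mk hli hspan P = WS P := Module.Basis.mk_apply hli hspan P
  rw [this]
  rfl

end AuxPartitionBasis

theorem partition_basis_of_exteriorPower
    {A : Type*} [CommRing A] {M : Type*} [AddCommGroup M] [Module A M]
    (m r : ℕ) (e : Module.Basis (Fin m) A M) :
    ∃ b : Module.Basis {P : Fin m →o Fin (r + 1) // ∀ j : Fin (r + 1), j ≠ 0 → ∃ i, P i = j}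
        A (⋀[A]^r M),
      ∀ P, (b P : ExteriorAlgebra A M) =
        ExteriorAlgebra.ιMulti A r
          (fun j : Fin r =>
            ∑ i ∈ Finset.univ.filter (fun i : Fin m => P.1 i = Fin.succ j), e i) := by
  exact partition_basis_of_exteriorPower' m r e
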